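/- Let z_1,…,z_n ∈ ℝ^p and c₁ ≥ 1 satisfy p/c₁ ≤ ‖z_k‖² ≤ c₁ p for all k, and |z_i · z_j| ≤ c₁ B for all i ≠ j, where B > 0 is a constant with p > 8 c₁² n B. Let θ^{(t)} be the gradient descent iterates on the logistic loss R(θ) = Σ_k log(1 + exp(−θ·z_k)) starting from θ^{(0)} = 0 with learning rate β ≤ (1/(2c₁)) (p + 2 n (B))^{-1}. Then there exists a constant c₃ (one may take c₃ = 8 c₁²) such that for all iterations t ≥ 0: max_{i,j ∈ [n]} (1 + exp(θ^{(t)} · z_j)) / (1 + exp(θ^{(t)} · z_i)) ≤ c₃. -/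

import Mathlib

open MeasureTheory Real
open scoped ENNReal

noncomputable section

/-- The set of admissible constants in the definition of the exponential
Orlicz (quasi-)norm of order `a` of a real random variable `X` under `μ`. -/
def orliczSet {Ω : Type*} [MeasurableSpace Ω] (μ : Measure Ω) (a : ℝ) (X : Ω → ℝ) : Set ℝ :=
  {t : ℝ | 0 < t ∧ ∫⁻ ω, ENNReal.ofReal (Real.exp (|X ω| ^ a / t ^ a)) ∂μ ≤ 2}

/-- The exponential Orlicz norm `‖X‖_{ψ_a}`. -/
def orliczNorm {Ω : Type*} [MeasurableSpace Ω] (μ : Measure Ω) (a : ℝ) (X : Ω → ℝ) : ℝ :=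
  sInf (orliczSet μ a X)

/-- Euclidean dot product on `Fin p → ℝ`. -/
def dotp {p : ℕ} (u v : Fin p → ℝ) : ℝ := ∑ i, u i * v i

/-- Squared Euclidean norm on `Fin p → ℝ`. -/
def sqnorm {p : ℕ} (u : Fin p → ℝ) : ℝ := ∑ i, u i ^ 2

/-- Euclidean norm on `Fin p → ℝ`. -/
def euclNorm {p : ℕ} (u : Fin p → ℝ) : ℝ := Real.sqrt (sqnorm u)

/-- Total variation distance between two measures. -/
def tvDist {Ω : Type*} [MeasurableSpace Ω] (P Q : Measure Ω) : ℝ :=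
  ⨆ s : {s : Set Ω // MeasurableSet s}, |(P s.1).toReal - (Q s.1).toReal|

/-- The uniform distribution on `{-1, 1} ⊆ ℝ`. -/
def signMeasure : Measure ℝ :=
  (2 : ℝ≥0∞)⁻¹ • Measure.dirac (-1) + (2 : ℝ≥0∞)⁻¹ • Measure.dirac 1

instance : IsProbabilityMeasure signMeasure := by
  constructor
  simp [signMeasure, Measure.add_apply, Measure.smul_apply, smul_eq_mul]
  exact ENNReal.inv_two_add_inv_two

/-- The label-flip distribution: takes the value `-1` with probability `η`
and the value `1` with probability `1 - η`. -/
def flipM (η : ℝ) : Measure ℝ :=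
  ENNReal.ofReal η • Measure.dirac (-1) + ENNReal.ofReal (1 - η) • Measure.dirac 1

instance (η : ℝ) : IsFiniteMeasure (flipM η) := by
  constructor
  simp only [flipM, Measure.add_apply, Measure.smul_apply, smul_eq_mul, measure_univ, mul_one]
  exact ENNReal.add_lt_top.mpr ⟨ENNReal.ofReal_lt_top, ENNReal.ofReal_lt_top⟩

/-- The "clean" distribution `P̃`: the law of `(U q + ỹ μ, ỹ)` where `q ∼ P_clust` and
`ỹ` is a uniform random sign, independent of `q`. -/
def cleanDist {p : ℕ} (Pc : Fin p → Measure ℝ) [∀ j, SigmaFinite (Pc j)]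
    (U : Matrix (Fin p) (Fin p) ℝ) (μv : Fin p → ℝ) : Measure ((Fin p → ℝ) × ℝ) :=
  ((Measure.pi Pc).prod signMeasure).map fun qy => (U.mulVec qy.1 + qy.2 • μv, qy.2)

/-- Largest singular value of a matrix, i.e. its Euclidean operator norm. -/
def s1 {p n : ℕ} (X : Matrix (Fin p) (Fin n) ℝ) : ℝ :=
  sSup {r : ℝ | ∃ u : Fin n → ℝ, sqnorm u ≤ 1 ∧ r = euclNorm (X.mulVec u)}

/-- Linear separability of a labelled sample. -/
def LinSep {p n : ℕ} (x : Fin n → Fin p → ℝ) (y : Fin n → ℝ) : Prop :=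
  ∃ v : Fin p → ℝ, ∀ i, 0 < y i * dotp v (x i)

/-- `w` is the maximum margin (minimum norm) classifier for the sample `(x, y)`. -/
def IsMaxMargin {p n : ℕ} (x : Fin n → Fin p → ℝ) (y : Fin n → ℝ) (w : Fin p → ℝ) : Prop :=
  (∀ i, 1 ≤ y i * dotp w (x i)) ∧
    ∀ u : Fin p → ℝ, (∀ i, 1 ≤ y i * dotp u (x i)) → euclNorm w ≤ euclNorm u

/-- The generalized normal distribution with location `0`, scale `σ` and shape `γ`. -/
def genNormal (σ γ : ℝ) : Measure ℝ :=
  volume.withDensity fun x =>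
    ENNReal.ofReal (γ / (2 * σ * Real.Gamma (1 / γ)) * Real.exp (-|x / σ| ^ γ))

/-- The sample-generating measure in the reduced model (`U = I`): independent coordinates
`q_k ∼ P_clust` (i.i.d.), `ỹ_k` uniform signs (i.i.d.), and label-flip signs `ε_k` (i.i.d.,
`ε_k = -1` with probability `η`). -/
def sampleMeasure (p n : ℕ) (Pc : Fin p → Measure ℝ) [∀ j, SigmaFinite (Pc j)] (η : ℝ) :
    Measure ((Fin n → Fin p → ℝ) × ((Fin n → ℝ) × (Fin n → ℝ))) :=
  (Measure.pi fun _ : Fin n => Measure.pi Pc).prod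
    ((Measure.pi fun _ : Fin n => signMeasure).prod (Measure.pi fun _ : Fin n => flipM η))

/-- The input vector `x = q + ỹ μ` in the reduced model. -/
def xvec {p : ℕ} (μv : Fin p → ℝ) (q : Fin p → ℝ) (ty : ℝ) : Fin p → ℝ :=
  fun i => q i + ty * μv i

/-- The vector `z = y x = (ε ỹ) (q + ỹ μ)` in the reduced model. -/
def zvec {p : ℕ} (μv : Fin p → ℝ) (q : Fin p → ℝ) (ty e : ℝ) : Fin p → ℝ :=
  fun i => e * ty * (q i + ty * μv i)

end


lemma aux_exp_upper (x d : ℝ) :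
    1 + Real.exp (x + d) ≤ Real.exp (max d 0) * (1 + Real.exp x) := by
  rcases le_total d 0 with hd | hd
  · rw [max_eq_right hd]
    simp only [Real.exp_zero, one_mul]
    have h := Real.exp_le_exp.mpr (by linarith : x + d ≤ x)
    linarith
  · rw [max_eq_left hd]
    have h1 : 1 ≤ Real.exp d := Real.one_le_exp hd
    have h2 : Real.exp (x + d) = Real.exp x * Real.exp d := Real.exp_add x d
    nlinarith [Real.exp_pos x]

lemma aux_exp_lower (a d : ℝ) (ha : 0 ≤ a) (hd : 0 ≤ d) :
    Real.exp (d / 2) * (1 + Real.exp a) ≤ 1 + Real.exp (a + d) := by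
  have h1 : 1 ≤ Real.exp (d / 2) := Real.one_le_exp (by linarith)
  have h2 : 1 ≤ Real.exp a := Real.one_le_exp ha
  have h3 : Real.exp (a + d) = Real.exp a * (Real.exp (d / 2) * Real.exp (d / 2)) := by
    rw [← Real.exp_add, ← Real.exp_add]; ring_nf
  have key : 0 ≤ (Real.exp (d / 2) - 1) * (Real.exp a * Real.exp (d / 2) - 1) :=
    mul_nonneg (by linarith) (by nlinarith)
  nlinarith

lemma aux_exp_third : Real.exp ((1:ℝ) / 3) ≤ 3 / 2 := by
  have h : Real.exp ((1:ℝ)/3) ^ (3:ℕ) = Real.exp 1 := by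
    rw [← Real.exp_nat_mul]; norm_num
  have h2 := Real.exp_one_lt_d9
  by_contra hcon
  push_neg at hcon
  have h4 : ((3:ℝ)/2) ^ (3:ℕ) < Real.exp ((1:ℝ)/3) ^ (3:ℕ) :=
    pow_lt_pow_left₀ hcon (by norm_num) (by norm_num)
  rw [h] at h4
  norm_num at h4
  linarith

lemma aux_sum_erase {n : ℕ} (i : Fin n) (h : Fin n → ℝ) (c : ℝ) (hc : 0 ≤ c)
    (hb : ∀ k, k ≠ i → |h k| ≤ c) :
    |∑ k ∈ Finset.univ.erase i, h k| ≤ n * c := by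
  calc |∑ k ∈ Finset.univ.erase i, h k| ≤ ∑ k ∈ Finset.univ.erase i, |h k| :=
        Finset.abs_sum_le_sum_abs _ _
    _ ≤ ∑ _k ∈ Finset.univ.erase i, c :=
        Finset.sum_le_sum fun k hk => hb k (Finset.ne_of_mem_erase hk)
    _ = ((Finset.univ.erase i).card : ℝ) * c := by rw [Finset.sum_const, nsmul_eq_mul]
    _ ≤ n * c := by
        apply mul_le_mul_of_nonneg_right _ hc
        have h3 := Finset.card_le_card (Finset.erase_subset i (Finset.univ : Finset (Fin n)))
        have h4 : (Finset.univ : Finset (Fin n)).card = n := by simp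
        exact_mod_cast h4 ▸ h3

lemma aux_inv_le {Nj Nk K : ℝ} (hNj : 0 < Nj) (hNk : 0 < Nk) (h : Nj ≤ K * Nk) :
    Nk⁻¹ ≤ K * Nj⁻¹ := by
  rw [show K * Nj⁻¹ = K / Nj from by ring, inv_eq_one_div, div_le_div_iff₀ hNk hNj]
  linarith

lemma aux_inv_le' {Ni Nj c : ℝ} (hNi : 0 < Ni) (hNj : 0 < Nj) (h : c * Ni ≤ Nj) :
    c * Nj⁻¹ ≤ Ni⁻¹ := by
  rw [show c * Nj⁻¹ = c / Nj from by ring, inv_eq_one_div, div_le_div_iff₀ hNj hNi]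
  linarith

set_option maxHeartbeats 1000000 in
lemma step_lemma (n : ℕ) (W : Fin n → Fin n → ℝ) (c₁ B β A : ℝ)
    (hc₁ : 1 ≤ c₁) (hB : 0 < B) (hA : 0 < A) (hβpos : 0 < β)
    (hdiag : ∀ k, A / c₁ ≤ W k k ∧ W k k ≤ c₁ * A)
    (hoff : ∀ k i, k ≠ i → |W k i| ≤ c₁ * B)
    (hE : 8 * c₁ * (c₁ * B * n) ≤ A)
    (hβ1 : β * (c₁ * A) ≤ 1 / 2)
    (a : Fin n → ℝ) (g : Fin n → ℝ) (hg : ∀ l, g l = (1 + Real.exp (a l))⁻¹)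
    (hpos : ∀ k, 0 ≤ a k)
    (hrat : ∀ i j, 1 + Real.exp (a j) ≤ 8 * c₁ ^ 2 * (1 + Real.exp (a i))) :
    (∀ k, 0 ≤ a k + β * ∑ l, g l * W l k) ∧
    (∀ i j, 1 + Real.exp (a j + β * ∑ l, g l * W l j) ≤
      8 * c₁ ^ 2 * (1 + Real.exp (a i + β * ∑ l, g l * W l i))) := by
  have hc0 : (0:ℝ) < c₁ := by linarith
  have hNpos : ∀ l, (0:ℝ) < 1 + Real.exp (a l) := fun l => by positivity
  have hgpos : ∀ l, 0 < g l := fun l => by rw [hg l]; positivity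
  have hgle : ∀ l, g l ≤ 1 / 2 := by
    intro l
    rw [hg l]
    have h1 : Real.exp 0 ≤ Real.exp (a l) := Real.exp_le_exp.mpr (hpos l)
    rw [Real.exp_zero] at h1
    have h2 : (2:ℝ) ≤ 1 + Real.exp (a l) := by linarith
    calc (1 + Real.exp (a l))⁻¹ ≤ (2:ℝ)⁻¹ := inv_anti₀ (by norm_num) h2
      _ = 1 / 2 := by norm_num
  have hsplit : ∀ i, ∑ l, g l * W l i =
      g i * W i i + ∑ l ∈ Finset.univ.erase i, g l * W l i :=
    fun i => (Finset.add_sum_erase _ (fun l => g l * W l i) (Finset.mem_univ i)).symm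
  have hWpos : ∀ k, 0 < W k k := fun k => lt_of_lt_of_le (div_pos hA hc0) (hdiag k).1
  have hRcrude : ∀ i, |∑ l ∈ Finset.univ.erase i, g l * W l i| ≤ (n:ℝ) * (1/2 * (c₁ * B)) := by
    intro i
    apply aux_sum_erase _ _ _ (by positivity)
    intro k hk
    rw [abs_mul, abs_of_pos (hgpos k)]
    exact mul_le_mul (hgle k) (hoff k i hk) (abs_nonneg _) (by norm_num)
  have hβ2 : 2 * (β * A) ≤ c₁ := by
    nlinarith [mul_nonneg (sub_nonneg.mpr hc₁) (le_of_lt (mul_pos hβpos hA))]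
  have hβR : ∀ i, β * |∑ l ∈ Finset.univ.erase i, g l * W l i| ≤ 1 / 32 := by
    intro i
    have h1 := hRcrude i
    have hXE : ((n:ℝ) * (1/2 * (c₁ * B))) * (16 * c₁) ≤ A := by nlinarith [hE]
    have h2 : β * ((n:ℝ) * (1/2 * (c₁ * B))) ≤ 1 / 32 := by
      have h3 := mul_le_mul_of_nonneg_left hXE (le_of_lt hβpos)
      nlinarith [mul_nonneg (le_of_lt hβpos) (show (0:ℝ) ≤ (n:ℝ) * (1/2 * (c₁ * B)) by positivity)]
    calc β * |∑ l ∈ Finset.univ.erase i, g l * W l i|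
        ≤ β * ((n:ℝ) * (1/2 * (c₁ * B))) := mul_le_mul_of_nonneg_left h1 (le_of_lt hβpos)
      _ ≤ 1 / 32 := h2
  have hstep_ub : ∀ i, β * ∑ l, g l * W l i ≤ 9 / 32 := by
    intro i
    rw [hsplit i, mul_add]
    have hgiW : g i * W i i ≤ 1/2 * (c₁ * A) :=
      mul_le_mul (hgle i) (hdiag i).2 (le_of_lt (hWpos i)) (by norm_num)
    have h4 : β * (g i * W i i) ≤ 1 / 4 := by
      have := mul_le_mul_of_nonneg_left hgiW (le_of_lt hβpos)
      nlinarith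
    have h5 : β * (∑ l ∈ Finset.univ.erase i, g l * W l i) ≤ 1 / 32 := by
      have := mul_le_mul_of_nonneg_left (le_abs_self (∑ l ∈ Finset.univ.erase i, g l * W l i))
        (le_of_lt hβpos)
      linarith [hβR i]
    linarith
  have hstep_lb : ∀ i, -(1/32) ≤ β * ∑ l, g l * W l i := by
    intro i
    rw [hsplit i, mul_add]
    have h0 : 0 ≤ β * (g i * W i i) :=
      mul_nonneg (le_of_lt hβpos) (mul_nonneg (le_of_lt (hgpos i)) (le_of_lt (hWpos i)))
    have h5 : -(1/32) ≤ β * (∑ l ∈ Finset.univ.erase i, g l * W l i) := by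
      have := mul_le_mul_of_nonneg_left (neg_abs_le (∑ l ∈ Finset.univ.erase i, g l * W l i))
        (le_of_lt hβpos)
      have h6 := hβR i
      nlinarith
    linarith
  constructor
  · -- positivity
    intro k
    rcases le_or_gt (1/16 : ℝ) (g k) with hgk | hgk
    · have hgW : 1/16 * (A / c₁) ≤ g k * W k k :=
        mul_le_mul hgk (hdiag k).1 (le_of_lt (div_pos hA hc0)) (le_of_lt (hgpos k))
      have hRlb := (abs_le.mp (hRcrude k)).1
      have hRb2 : (n:ℝ) * (1/2 * (c₁ * B)) ≤ A / (16 * c₁) := by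
        rw [le_div_iff₀ (by positivity)]
        nlinarith [hE]
      have heq : 1/16 * (A / c₁) = A / (16 * c₁) := by ring
      have hS0 : 0 ≤ ∑ l, g l * W l k := by
        rw [hsplit k]
        linarith [hgW, hRlb, hRb2, heq ▸ hgW]
      exact add_nonneg (hpos k) (mul_nonneg (le_of_lt hβpos) hS0)
    · have hN16 : (16:ℝ) < 1 + Real.exp (a k) := by
        by_contra hcon
        push_neg at hcon
        have h7 : (16:ℝ)⁻¹ ≤ (1 + Real.exp (a k))⁻¹ := inv_anti₀ (hNpos k) hcon
        rw [← hg k] at h7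
        norm_num at h7
        linarith
      have ha1 : 1 < a k := by
        have h15 : Real.exp 1 < Real.exp (a k) := by
          nlinarith [Real.exp_one_lt_d9]
        exact Real.exp_lt_exp.mp h15
      linarith [hstep_lb k]
  · -- ratio
    intro i j
    by_cases hcase : 1 + Real.exp (a j) ≤ 2/3 * (8 * c₁ ^ 2) * (1 + Real.exp (a i))
    · -- Case A
      have hup := aux_exp_upper (a j) (β * ∑ l, g l * W l j)
      have hlow := aux_exp_upper (a i + β * ∑ l, g l * W l i) (-(β * ∑ l, g l * W l i))
      rw [add_neg_cancel_right] at hlow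
      have hm1 : max (β * ∑ l, g l * W l j) 0 ≤ 9/32 := max_le (hstep_ub j) (by norm_num)
      have hm2 : max (-(β * ∑ l, g l * W l i)) 0 ≤ 1/32 :=
        max_le (by linarith [hstep_lb i]) (by norm_num)
      have hexp : Real.exp (max (β * ∑ l, g l * W l j) 0) *
          Real.exp (max (-(β * ∑ l, g l * W l i)) 0) ≤ 3/2 := by
        rw [← Real.exp_add]
        calc Real.exp (max (β * ∑ l, g l * W l j) 0 + max (-(β * ∑ l, g l * W l i)) 0)
            ≤ Real.exp ((1:ℝ)/3) := Real.exp_le_exp.mpr (by linarith)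
          _ ≤ 3/2 := aux_exp_third
      calc 1 + Real.exp (a j + β * ∑ l, g l * W l j)
          ≤ Real.exp (max (β * ∑ l, g l * W l j) 0) * (1 + Real.exp (a j)) := hup
        _ ≤ Real.exp (max (β * ∑ l, g l * W l j) 0) *
            (2/3 * (8 * c₁ ^ 2) * (1 + Real.exp (a i))) :=
            mul_le_mul_of_nonneg_left hcase (le_of_lt (Real.exp_pos _))
        _ ≤ Real.exp (max (β * ∑ l, g l * W l j) 0) *
            (2/3 * (8 * c₁ ^ 2) * (Real.exp (max (-(β * ∑ l, g l * W l i)) 0) *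
              (1 + Real.exp (a i + β * ∑ l, g l * W l i)))) := by
            apply mul_le_mul_of_nonneg_left _ (le_of_lt (Real.exp_pos _))
            exact mul_le_mul_of_nonneg_left hlow (by positivity)
        _ = (Real.exp (max (β * ∑ l, g l * W l j) 0) *
              Real.exp (max (-(β * ∑ l, g l * W l i)) 0)) *
            (2/3 * (8 * c₁ ^ 2) * (1 + Real.exp (a i + β * ∑ l, g l * W l i))) := by ring
        _ ≤ 3/2 * (2/3 * (8 * c₁ ^ 2) * (1 + Real.exp (a i + β * ∑ l, g l * W l i))) := by
            apply mul_le_mul_of_nonneg_right hexp (by positivity)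
        _ = 8 * c₁ ^ 2 * (1 + Real.exp (a i + β * ∑ l, g l * W l i)) := by ring
    · -- Case B
      push_neg at hcase
      have hgi : 2/3 * (8 * c₁ ^ 2) * g j ≤ g i := by
        rw [hg i, hg j]
        exact aux_inv_le' (hNpos i) (hNpos j) (le_of_lt hcase)
      have hKg : ∀ k, g k ≤ 8 * c₁ ^ 2 * g j := by
        intro k
        rw [hg k, hg j]
        exact aux_inv_le (hNpos j) (hNpos k) (hrat k j)
      have hgj0 : (0:ℝ) < g j := hgpos j
      have hRB : ∀ i', |∑ l ∈ Finset.univ.erase i', g l * W l i'| ≤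
          (n:ℝ) * ((8 * c₁ ^ 2 * g j) * (c₁ * B)) := by
        intro i'
        apply aux_sum_erase _ _ _ (by positivity)
        intro k hk
        rw [abs_mul, abs_of_pos (hgpos k)]
        exact mul_le_mul (hKg k) (hoff k i' hk) (abs_nonneg _) (by positivity)
      -- c₁ * W k k ≥ A
      have hWA : ∀ k, A ≤ c₁ * W k k := by
        intro k
        have := (hdiag k).1
        rw [div_le_iff₀ hc0] at this
        linarith [this]
      -- lower bound on S i
      have hRi := (abs_le.mp (hRB i)).1
      have hRj := (abs_le.mp (hRB j)).2
      have hcross : c₁ * ((n:ℝ) * ((8 * c₁ ^ 2 * g j) * (c₁ * B))) ≤ c₁ ^ 2 * g j * A := by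
        have h := mul_le_mul_of_nonneg_left hE (le_of_lt (mul_pos (pow_pos hc0 2) hgj0))
        calc c₁ * ((n:ℝ) * ((8 * c₁ ^ 2 * g j) * (c₁ * B)))
            = c₁ ^ 2 * g j * (8 * c₁ * (c₁ * B * n)) := by ring
          _ ≤ c₁ ^ 2 * g j * A := h
          _ = c₁ ^ 2 * g j * A := by ring
      have hgiWA : 16/3 * c₁ ^ 2 * g j * A ≤ c₁ * (g i * W i i) := by
        have h8 : (2/3 * (8 * c₁ ^ 2) * g j) * A ≤ g i * (c₁ * W i i) :=
          mul_le_mul hgi (hWA i) (le_of_lt hA) (le_of_lt (hgpos i))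
        nlinarith [h8]
      have hSi : 13/3 * c₁ ^ 2 * g j * A ≤ c₁ * ∑ l, g l * W l i := by
        rw [hsplit i, mul_add]
        have h9 : c₁ * (∑ l ∈ Finset.univ.erase i, g l * W l i) ≥
            -(c₁ ^ 2 * g j * A) := by nlinarith [hRi, hcross]
        linarith [hgiWA]
      have hSj : c₁ * ∑ l, g l * W l j ≤ 2 * c₁ ^ 2 * g j * A := by
        rw [hsplit j, mul_add]
        have hgjW : c₁ * (g j * W j j) ≤ c₁ ^ 2 * g j * A := by
          have h10 : g j * W j j ≤ g j * (c₁ * A) :=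
            mul_le_mul_of_nonneg_left (hdiag j).2 (le_of_lt hgj0)
          nlinarith [h10]
        have h11 : c₁ * (∑ l ∈ Finset.univ.erase j, g l * W l j) ≤ c₁ ^ 2 * g j * A := by
          nlinarith [hRj, hcross]
        linarith
      have hSi0 : 0 ≤ ∑ l, g l * W l i := by
        nlinarith [hSi, mul_pos (mul_pos (mul_pos (by norm_num : (0:ℝ) < 13/3)
          (pow_pos hc0 2)) hgj0) hA]
      have hdi0 : 0 ≤ β * ∑ l, g l * W l i := mul_nonneg (le_of_lt hβpos) hSi0
      have hhalf : β * ∑ l, g l * W l j ≤ (β * ∑ l, g l * W l i) / 2 := by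
        have h12 : 2 * (c₁ * ∑ l, g l * W l j) ≤ c₁ * ∑ l, g l * W l i := by
          nlinarith [hSi, hSj, mul_pos (mul_pos (pow_pos hc0 2) hgj0) hA]
        have h13 : 2 * ∑ l, g l * W l j ≤ ∑ l, g l * W l i := by
          nlinarith [h12]
        nlinarith [h13, hβpos]
      have hup := aux_exp_upper (a j) (β * ∑ l, g l * W l j)
      have hmax : max (β * ∑ l, g l * W l j) 0 ≤ (β * ∑ l, g l * W l i) / 2 :=
        max_le hhalf (by positivity)
      have hlow := aux_exp_lower (a i) (β * ∑ l, g l * W l i) (hpos i) hdi0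
      calc 1 + Real.exp (a j + β * ∑ l, g l * W l j)
          ≤ Real.exp (max (β * ∑ l, g l * W l j) 0) * (1 + Real.exp (a j)) := hup
        _ ≤ Real.exp ((β * ∑ l, g l * W l i) / 2) * (1 + Real.exp (a j)) := by
            apply mul_le_mul_of_nonneg_right (Real.exp_le_exp.mpr hmax)
            positivity
        _ ≤ Real.exp ((β * ∑ l, g l * W l i) / 2) *
            (8 * c₁ ^ 2 * (1 + Real.exp (a i))) :=
            mul_le_mul_of_nonneg_left (hrat i j) (le_of_lt (Real.exp_pos _))
        _ = 8 * c₁ ^ 2 * (Real.exp ((β * ∑ l, g l * W l i) / 2) * (1 + Real.exp (a i))) := by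
            ring
        _ ≤ 8 * c₁ ^ 2 * (1 + Real.exp (a i + β * ∑ l, g l * W l i)) :=
            mul_le_mul_of_nonneg_left hlow (by positivity)

/-- along gradient descent on the logistic loss with a small enough
learning rate, the ratio of sigmoid losses between any two samples is uniformly bounded
by a constant `c₃` (one may take `c₃ = 8 c₁²`). -/
theorem sigmoid_loss_ratio_bounded
    (p n : ℕ) (z : Fin n → Fin p → ℝ) (c₁ B β : ℝ)
    (hc₁ : 1 ≤ c₁) (hB : 0 < B)
    (h1 : ∀ k, (p : ℝ) / c₁ ≤ sqnorm (z k) ∧ sqnorm (z k) ≤ c₁ * p)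
    (h2 : ∀ i j, i ≠ j → |dotp (z i) (z j)| ≤ c₁ * B)
    (hp : 8 * c₁ ^ 2 * n * B < (p : ℝ))
    (hβpos : 0 < β)
    (hβ : β ≤ 1 / (2 * c₁) * ((p : ℝ) + 2 * n * B)⁻¹)
    (θ : ℕ → Fin p → ℝ) (hθ0 : θ 0 = 0)
    (hθ : ∀ t, θ (t + 1) = θ t + β • ∑ k, (1 + Real.exp (dotp (θ t) (z k)))⁻¹ • z k) :
    ∃ c₃ : ℝ, ∀ t, ∀ i j,
      (1 + Real.exp (dotp (θ t) (z j))) / (1 + Real.exp (dotp (θ t) (z i))) ≤ c₃ := by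
  have hc0 : (0:ℝ) < c₁ := by linarith
  have h0nB : (0:ℝ) ≤ 8 * c₁ ^ 2 * n * B := by positivity
  have hA : (0:ℝ) < (p:ℝ) := by linarith
  have hdots : ∀ u : Fin p → ℝ, dotp u u = sqnorm u := by
    intro u; simp [dotp, sqnorm, sq]
  have hdiag : ∀ k, (p:ℝ) / c₁ ≤ dotp (z k) (z k) ∧ dotp (z k) (z k) ≤ c₁ * p := by
    intro k; rw [hdots]; exact h1 k
  have hE : 8 * c₁ * (c₁ * B * n) ≤ (p:ℝ) := by nlinarith [hp]
  have hβ1 : β * (c₁ * (p:ℝ)) ≤ 1 / 2 := by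
    have hnB0 : (0:ℝ) ≤ 2 * n * B := by positivity
    have hpos2 : (0:ℝ) < (p:ℝ) + 2 * n * B := by linarith
    have h := mul_le_mul_of_nonneg_right hβ (le_of_lt (mul_pos hc0 hpos2))
    have heq : 1 / (2 * c₁) * ((p:ℝ) + 2 * n * B)⁻¹ * (c₁ * ((p:ℝ) + 2 * n * B)) = 1 / 2 := by
      field_simp
    rw [heq] at h
    nlinarith [mul_nonneg (le_of_lt hβpos) (mul_nonneg (le_of_lt hc0) hnB0)]
  have hrec : ∀ t i, dotp (θ (t + 1)) (z i) =
      dotp (θ t) (z i) + β * ∑ k, (1 + Real.exp (dotp (θ t) (z k)))⁻¹ * dotp (z k) (z i) := by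
    intro t i
    rw [hθ t]
    simp only [dotp, Pi.add_apply, Pi.smul_apply, Finset.sum_apply, smul_eq_mul, add_mul,
      Finset.sum_add_distrib, Finset.mul_sum, Finset.sum_mul]
    congr 1
    rw [Finset.sum_comm]
    apply Finset.sum_congr rfl
    intro k _
    apply Finset.sum_congr rfl
    intro l _
    ring
  have key : ∀ t, (∀ k, 0 ≤ dotp (θ t) (z k)) ∧
      (∀ i j, 1 + Real.exp (dotp (θ t) (z j)) ≤
        8 * c₁ ^ 2 * (1 + Real.exp (dotp (θ t) (z i)))) := by
    intro t
    induction t with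
    | zero =>
      constructor
      · intro k; simp [hθ0, dotp]
      · intro i j
        simp only [hθ0]
        have hz : ∀ k, dotp (0 : Fin p → ℝ) (z k) = 0 := by intro k; simp [dotp]
        rw [hz i, hz j, Real.exp_zero]
        nlinarith [sq_nonneg c₁]
    | succ t ih =>
      have hstep := step_lemma n (fun k i => dotp (z k) (z i)) c₁ B β (p:ℝ) hc₁ hB hA hβpos
        hdiag (fun k i hk => h2 k i hk) hE hβ1
        (fun k => dotp (θ t) (z k)) (fun k => (1 + Real.exp (dotp (θ t) (z k)))⁻¹)
        (fun l => rfl) ih.1 ih.2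
      constructor
      · intro k
        rw [hrec t k]
        exact hstep.1 k
      · intro i j
        rw [hrec t i, hrec t j]
        exact hstep.2 i j
  refine ⟨8 * c₁ ^ 2, ?_⟩
  intro t i j
  have h := (key t).2 i j
  have hNpos : (0:ℝ) < 1 + Real.exp (dotp (θ t) (z i)) := by positivity
  rw [div_le_iff₀ hNpos]
  linarith
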